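/- Let d ≥ 1, let K1,...,Kd be nonmetrizable compact Hausdorff spaces, and let K_{d+1} be an infinite compact Hausdorff space. Then the product K1 × K2 × ... × Kd × K_{d+1} does not have free dimension ≤ d (i.e., its free dimension is at least d+1). -/

import Mathlib

/-- `C` is a finite closed cover of the space `X`. -/
def IsFCC {X : Type*} [TopologicalSpace X] (C : Finset (Set X)) : Prop :=
  (∀ c ∈ C, IsClosed c) ∧ ⋃₀ (↑C : Set (Set X)) = Set.univ

/-- The cover `C₁` refines the cover `C₂`. -/
def Refines {X : Type*} (C₁ C₂ : Finset (Set X)) : Prop :=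
  ∀ c ∈ C₁, ∃ c' ∈ C₂, c ⊆ c'

/-- The finite cover `C` refines the family of sets `U`. -/
def RefinesFam {X : Type*} (C : Finset (Set X)) (U : Set (Set X)) : Prop :=
  ∀ c ∈ C, ∃ u ∈ U, c ⊆ u

/-- `𝔠` is a topologically cofinal family of finite closed covers of `X`:
every open cover of `X` is refined by some member of `𝔠`. -/
def TopCofinal {X : Type*} [TopologicalSpace X] (𝔠 : Set (Finset (Set X))) : Prop :=
  (∀ C ∈ 𝔠, IsFCC C) ∧
    ∀ U : Set (Set X), (∀ u ∈ U, IsOpen u) → ⋃₀ U = Set.univ →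
      ∃ C ∈ 𝔠, RefinesFam C U

/-- `X` has free dimension ≤ d: there are a topologically cofinal family `𝔠` of finite
closed covers of `X`, a constant `M > 0` and `χ : 𝔠 → ℕ` such that any finitely many
covers `C₁, …, C_k ∈ 𝔠` admit a joint finite closed refinement of cardinality at most
`M * (χ C₁ + ⋯ + χ C_k) ^ d`. -/
def FreeDimLE (X : Type*) [TopologicalSpace X] (d : ℕ) : Prop :=
  ∃ (𝔠 : Set (Finset (Set X))) (M : ℕ) (χ : Finset (Set X) → ℕ), 0 < M ∧
    TopCofinal 𝔠 ∧
    ∀ (k : ℕ) (f : Fin k → Finset (Set X)), (∀ i, f i ∈ 𝔠) →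
      ∃ C : Finset (Set X), IsFCC C ∧ (∀ i, Refines C (f i)) ∧
        C.card ≤ M * (∑ i, χ (f i)) ^ d

open Set
open scoped Classical
set_option linter.unusedSectionVars false

section A
variable {K : Type*} [TopologicalSpace K] [CompactSpace K] [T2Space K]


lemma metrizable_of_countable_sep (S : Set C(K, ℝ)) (hS : S.Countable)
    (hsep : ∀ x y : K, x ≠ y → ∃ f ∈ S, f x ≠ f y) :
    TopologicalSpace.MetrizableSpace K := by
  obtain ⟨e, he⟩ := (hS.insert 0).exists_eq_range (insert_nonempty _ _)
  have hcont : Continuous (fun x : K => (fun n : ℕ => e n x)) :=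
    continuous_pi fun n => (e n).continuous
  have hinj : Function.Injective (fun x : K => (fun n : ℕ => e n x)) := by
    intro x y hxy
    by_contra hne
    obtain ⟨f, hfS, hf⟩ := hsep x y hne
    have hmem : f ∈ insert (0 : C(K, ℝ)) S := mem_insert_of_mem _ hfS
    rw [he] at hmem
    obtain ⟨n, rfl⟩ := hmem
    exact hf (congrFun hxy n)
  exact (hcont.isClosedEmbedding hinj).toIsEmbedding.metrizableSpace

lemma exists_nonseparated_pair (hK : ¬ TopologicalSpace.MetrizableSpace K)
    (S : Set C(K, ℝ)) (hS : S.Countable) :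
    ∃ x y : K, x ≠ y ∧ ∀ f ∈ S, f x = f y := by
  by_contra h
  push_neg at h
  exact hK (metrizable_of_countable_sep S hS h)



noncomputable def towerF (t₀ : K × K × C(K, ℝ)) : Ordinal.{0} → K × K × C(K, ℝ) :=
  Ordinal.lt_wf.fix fun o rec =>
    if h : ∃ t : K × K × C(K, ℝ), t.2.2 t.1 = 0 ∧ t.2.2 t.2.1 = 1 ∧
        (∀ z, t.2.2 z ∈ Set.Icc (0 : ℝ) 1) ∧
        ∀ o' (h' : o' < o), (rec o' h').2.2 t.1 = (rec o' h').2.2 t.2.1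
    then h.choose else t₀

lemma towerF_eq (t₀ : K × K × C(K, ℝ)) (o : Ordinal.{0}) :
    towerF t₀ o =
    if h : ∃ t : K × K × C(K, ℝ), t.2.2 t.1 = 0 ∧ t.2.2 t.2.1 = 1 ∧
        (∀ z, t.2.2 z ∈ Set.Icc (0 : ℝ) 1) ∧
        ∀ o' (_ : o' < o), (towerF t₀ o').2.2 t.1 = (towerF t₀ o').2.2 t.2.1
    then h.choose else t₀ := by
  rw [towerF, WellFounded.fix_eq]




lemma countable_Iio_of_lt_omega1 {o : Ordinal.{0}} (ho : o < (Cardinal.aleph 1).ord) :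
    (Set.Iio o).Countable := by
  have h1 : o.card < Cardinal.aleph 1 := Cardinal.lt_ord.mp ho
  rw [Cardinal.countable_iff_lt_aleph_one, Ordinal.mk_Iio_ordinal, Ordinal.lift_card]
  have : Cardinal.lift.{1} o.card < Cardinal.lift.{1} (Cardinal.aleph 1) :=
    Cardinal.lift_lt.mpr h1
  rwa [Cardinal.lift_aleph, Ordinal.lift_one, Ordinal.lift_card] at this

lemma exists_tower (hK : ¬ TopologicalSpace.MetrizableSpace K) :
    ∃ (x y : Ordinal.{0} → K) (f : Ordinal.{0} → C(K, ℝ)),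
      ∀ o < (Cardinal.aleph 1).ord,
        f o (x o) = 0 ∧ f o (y o) = 1 ∧ (∀ z, f o z ∈ Set.Icc (0 : ℝ) 1) ∧
        ∀ o' < o, f o' (x o) = f o' (y o) := by
  have hne : Nonempty K := by
    by_contra h
    rw [not_nonempty_iff] at h
    exact hK (metrizable_of_countable_sep ∅ countable_empty fun x y hxy => (h.false x).elim)
  obtain ⟨k₀⟩ := hne
  have key : ∀ o : Ordinal.{0}, o < (Cardinal.aleph 1).ord →
      ∃ t : K × K × C(K, ℝ), t.2.2 t.1 = 0 ∧ t.2.2 t.2.1 = 1 ∧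
        (∀ z, t.2.2 z ∈ Set.Icc (0 : ℝ) 1) ∧
        ∀ o' (_ : o' < o), (towerF (k₀, k₀, 0) o').2.2 t.1
          = (towerF (k₀, k₀, 0) o').2.2 t.2.1 := by
    intro o ho
    have hS : ((fun o' => (towerF (k₀, k₀, (0 : C(K, ℝ))) o').2.2) '' Set.Iio o).Countable :=
      (countable_Iio_of_lt_omega1 ho).image _
    obtain ⟨x, y, hxy, hsame⟩ := exists_nonseparated_pair hK _ hS
    obtain ⟨f, hf0, hf1, hf01⟩ := exists_continuous_zero_one_of_isClosed
      (isClosed_singleton (x := x)) isClosed_singleton (disjoint_singleton.mpr hxy)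
    refine ⟨(x, y, f), ?_, ?_, hf01, fun o' h' => hsame _ ⟨o', h', rfl⟩⟩
    · simpa using hf0 (mem_singleton x)
    · simpa using hf1 (mem_singleton y)
  refine ⟨fun o => (towerF (k₀, k₀, 0) o).1, fun o => (towerF (k₀, k₀, 0) o).2.1,
    fun o => (towerF (k₀, k₀, 0) o).2.2, fun o ho => ?_⟩
  have H := key o ho
  have hgo : towerF (k₀, k₀, (0 : C(K, ℝ))) o = H.choose := by
    rw [towerF_eq (k₀, k₀, 0) o]
    exact dif_pos H
  dsimp only
  rw [hgo]
  obtain ⟨h1, h2, h3, h4⟩ := H.choose_spec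
  exact ⟨h1, h2, h3, fun o' ho' => h4 o' ho'⟩

end A

noncomputable def chainMin (S : {S : Set Ordinal.{0} // S.Infinite}) : Ordinal.{0} :=
  Ordinal.lt_wf.min S.1 S.2.nonempty

lemma chainMin_mem (S : {S : Set Ordinal.{0} // S.Infinite}) : chainMin S ∈ S.1 :=
  Ordinal.lt_wf.min_mem S.1 S.2.nonempty

lemma chainMin_le {S : {S : Set Ordinal.{0} // S.Infinite}} {x : Ordinal} (hx : x ∈ S.1) :
    chainMin S ≤ x :=
  not_lt.mp (Ordinal.lt_wf.not_lt_min S.1 hx)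

noncomputable def chainStep (c : Ordinal.{0} → Ordinal.{0} → Bool)
    (S : {S : Set Ordinal.{0} // S.Infinite}) : {S : Set Ordinal.{0} // S.Infinite} :=
  if h : {x ∈ S.1 | chainMin S < x ∧ c (chainMin S) x = true}.Infinite
  then ⟨_, h⟩
  else ⟨{x ∈ S.1 | chainMin S < x ∧ c (chainMin S) x = false}, by
    have h1 : (S.1 \ {chainMin S}).Infinite := S.2.diff (finite_singleton _)
    have hsub : S.1 \ {chainMin S} ⊆
        {x ∈ S.1 | chainMin S < x ∧ c (chainMin S) x = true} ∪
        {x ∈ S.1 | chainMin S < x ∧ c (chainMin S) x = false} := by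
      rintro x ⟨hxS, hxne⟩
      have hlt : chainMin S < x := lt_of_le_of_ne (chainMin_le hxS) (Ne.symm hxne)
      rcases Bool.eq_false_or_eq_true (c (chainMin S) x) with hb | hb
      · exact Or.inl ⟨hxS, hlt, hb⟩
      · exact Or.inr ⟨hxS, hlt, hb⟩
    by_contra hfin
    rw [Set.not_infinite] at hfin
    have hfin' := Set.not_infinite.mp h
    exact (h1.mono hsub) (hfin'.union hfin)⟩

lemma chainStep_subset (c) (S) : (chainStep c S).1 ⊆ {x ∈ S.1 | chainMin S < x} := by
  rw [chainStep]
  split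
  · exact fun x hx => ⟨hx.1, hx.2.1⟩
  · exact fun x hx => ⟨hx.1, hx.2.1⟩

lemma chainStep_color (c) (S) : ∃ b : Bool, ∀ x ∈ (chainStep c S).1, c (chainMin S) x = b := by
  rw [chainStep]
  split
  · exact ⟨true, fun x hx => hx.2.2⟩
  · exact ⟨false, fun x hx => hx.2.2⟩

lemma exists_mono_seq (c : Ordinal.{0} → Ordinal.{0} → Bool) {A : Set Ordinal.{0}}
    (hA : A.Infinite) :
    ∃ (a : ℕ → Ordinal.{0}) (t : ℕ → Bool), StrictMono a ∧ (∀ n, a n ∈ A) ∧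
      ∀ j l : ℕ, j < l → c (a j) (a l) = t j := by
  set B : ℕ → {S : Set Ordinal.{0} // S.Infinite} := fun n => (chainStep c)^[n] ⟨A, hA⟩ with hB
  have hBsucc : ∀ n, B (n + 1) = chainStep c (B n) := fun n => Function.iterate_succ_apply' _ _ _
  set a : ℕ → Ordinal.{0} := fun n => chainMin (B n) with ha
  choose t ht using fun n => chainStep_color c (B n)
  have hsub : ∀ n, (B (n + 1)).1 ⊆ (B n).1 := by
    intro n
    rw [hBsucc]
    exact fun x hx => (chainStep_subset c (B n) hx).1
  have hchain : ∀ j l : ℕ, j ≤ l → (B l).1 ⊆ (B j).1 := by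
    intro j l hjl
    induction l, hjl using Nat.le_induction with
    | base => exact fun x hx => hx
    | succ n hn ih => exact fun x hx => ih (hsub n hx)
  have hmemB : ∀ j l : ℕ, j < l → a l ∈ (B (j + 1)).1 := by
    intro j l hjl
    exact hchain (j + 1) l hjl (chainMin_mem (B l))
  refine ⟨a, t, strictMono_nat_of_lt_succ fun n => ?_, fun n => ?_, fun j l hjl => ?_⟩
  · have := hmemB n (n + 1) (Nat.lt_succ_self n)
    rw [hBsucc] at this
    exact (chainStep_subset c (B n) this).2
  · exact hchain 0 n (Nat.zero_le n) (chainMin_mem (B n))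
  · have := hmemB j l hjl
    rw [hBsucc] at this
    exact ht j _ this

lemma exists_infinite_fiber' (F : Ordinal.{0} → ℕ) :
    ∃ m : ℕ, {o ∈ Set.Iio (Cardinal.aleph 1).ord | F o = m}.Infinite := by
  by_contra h
  push_neg at h
  have hcnt : (Set.Iio (Cardinal.aleph 1).ord).Countable := by
    have heq : Set.Iio (Cardinal.aleph 1).ord
        = ⋃ m : ℕ, {o ∈ Set.Iio (Cardinal.aleph 1).ord | F o = m} := by
      ext o
      simp only [Set.mem_iUnion, Set.mem_setOf_eq, Set.mem_Iio]
      exact ⟨fun ho => ⟨F o, ho, rfl⟩, fun ⟨m, hm, _⟩ => hm⟩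
    rw [heq]
    exact Set.countable_iUnion fun m => (h m).countable
  rw [Cardinal.countable_iff_lt_aleph_one, Ordinal.mk_Iio_ordinal] at hcnt
  rw [Cardinal.card_ord] at hcnt
  rw [show (Cardinal.aleph 1 : Cardinal.{1}) = Cardinal.lift.{1,0} (Cardinal.aleph 1) from by
    rw [Cardinal.lift_aleph, Ordinal.lift_one]] at hcnt
  exact lt_irrefl _ hcnt

set_option synthInstance.maxHeartbeats 1000000 in
lemma countLemma {m : ℕ} {K : Fin m → Type*} (C : Finset (Set (∀ i, K i)))
    (hcov : ⋃₀ (↑C : Set (Set (∀ i, K i))) = Set.univ) (F : ∀ i, Finset (K i))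
    (hsep : ∀ i, ∀ u ∈ F i, ∀ v ∈ F i, u ≠ v → ∀ c ∈ C,
      ¬ ((∃ z ∈ c, z i = u) ∧ (∃ z ∈ c, z i = v))) :
    ∏ i, (F i).card ≤ C.card := by
  classical
  have hz : ∀ t : (∀ i, {u // u ∈ F i}), ∃ c, c ∈ C ∧ (fun i => (t i : K i)) ∈ c := by
    intro t
    have := Set.eq_univ_iff_forall.mp hcov (fun i => (t i : K i))
    obtain ⟨c, hc, hmem⟩ := Set.mem_sUnion.mp this
    exact ⟨c, hc, hmem⟩
  choose Φ hΦC hΦmem using hz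
  have hinj : Function.Injective (fun t => (⟨Φ t, hΦC t⟩ : {c // c ∈ C})) := by
    intro t t' h
    simp only [Subtype.mk.injEq] at h
    funext i
    by_contra hii
    refine hsep i (t i) (t i).2 (t' i) (t' i).2 (fun he => hii (Subtype.ext he)) (Φ t) (hΦC t)
      ⟨⟨_, hΦmem t, rfl⟩, ⟨_, h ▸ hΦmem t', rfl⟩⟩
  have hle := Fintype.card_le_of_injective _ hinj
  rw [Fintype.card_coe] at hle
  calc ∏ i, (F i).card = Fintype.card (∀ i, {u // u ∈ F i}) := by
        simp [Fintype.card_pi]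
    _ ≤ C.card := hle
set_option synthInstance.maxHeartbeats 1000000 in
set_option maxHeartbeats 1000000 in
lemma coord_package {m : ℕ} {K : Fin m → Type*} [∀ i, TopologicalSpace (K i)]
    (i₀ : Fin m) [CompactSpace (K i₀)] [T2Space (K i₀)]
    (hK : ¬ TopologicalSpace.MetrizableSpace (K i₀))
    (𝔠 : Set (Finset (Set (∀ i, K i)))) (χ : Finset (Set (∀ i, K i)) → ℕ)
    (hcof : ∀ U : Set (Set (∀ i, K i)), (∀ u ∈ U, IsOpen u) → ⋃₀ U = Set.univ →
      ∃ C ∈ 𝔠, RefinesFam C U) :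
    ∃ (mi : ℕ) (D : ℕ → Finset (Set (∀ i, K i))) (P : ℕ → K i₀),
      (∀ j, D j ∈ 𝔠 ∧ χ (D j) = mi) ∧
      Function.Injective P ∧
      ∀ l₁ l₂ : ℕ, l₁ < l₂ → ∀ c : Set (∀ i, K i),
        (∃ c' ∈ D l₁, c ⊆ c') →
        ¬ ((∃ z ∈ c, z i₀ = P l₁) ∧ (∃ z ∈ c, z i₀ = P l₂)) := by
  classical
  obtain ⟨x, y, f, htow⟩ := exists_tower hK
  have hCex : ∀ o : Ordinal.{0}, ∃ Co : Finset (Set (∀ i, K i)),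
      o < (Cardinal.aleph 1).ord → Co ∈ 𝔠 ∧ RefinesFam Co
        (Set.range (fun r : Fin 5 =>
          (fun z : ∀ i, K i => f o (z i₀)) ⁻¹' Set.Ioo ((r : ℝ)/4 - 1/4) ((r : ℝ)/4 + 1/4))) := by
    intro o
    by_cases ho : o < (Cardinal.aleph 1).ord
    · have hopen : ∀ u ∈ (Set.range (fun r : Fin 5 =>
          (fun z : ∀ i, K i => f o (z i₀)) ⁻¹' Set.Ioo ((r : ℝ)/4 - 1/4) ((r : ℝ)/4 + 1/4))),
          IsOpen u := by
        rintro u ⟨r, rfl⟩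
        exact IsOpen.preimage ((f o).continuous.comp (continuous_apply i₀)) isOpen_Ioo
      have hcover : ⋃₀ (Set.range (fun r : Fin 5 =>
          (fun z : ∀ i, K i => f o (z i₀)) ⁻¹' Set.Ioo ((r : ℝ)/4 - 1/4) ((r : ℝ)/4 + 1/4)))
          = Set.univ := by
        rw [Set.eq_univ_iff_forall]
        intro z
        have hv := (htow o ho).2.2.1 (z i₀)
        have h4v : (0:ℝ) ≤ 4 * f o (z i₀) := by nlinarith [hv.1]
        have hr4 : ⌊4 * f o (z i₀)⌋₊ ≤ 4 := by
          have h44 : (4 : ℝ) * f o (z i₀) ≤ ((4:ℕ) : ℝ) := by push_cast; nlinarith [hv.2]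
          have := Nat.floor_le_of_le h44
          simpa using this
        have hrle : ((⌊4 * f o (z i₀)⌋₊ : ℕ) : ℝ) ≤ 4 * f o (z i₀) := Nat.floor_le h4v
        have hrlt : 4 * f o (z i₀) < (⌊4 * f o (z i₀)⌋₊ : ℕ) + 1 := Nat.lt_floor_add_one _
        refine Set.mem_sUnion.mpr ⟨_, ⟨⟨⌊4 * f o (z i₀)⌋₊, by omega⟩, rfl⟩, ?_⟩
        simp only [Set.mem_preimage, Set.mem_Ioo]
        constructor <;> · push_cast; linarith
      obtain ⟨Co, h1, h2⟩ := hcof _ hopen hcover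
      exact ⟨Co, fun _ => ⟨h1, h2⟩⟩
    · exact ⟨∅, fun h => absurd h ho⟩
  choose Ccov hCcov using hCex
  obtain ⟨mi, hfib⟩ := exists_infinite_fiber' (fun o => χ (Ccov o))
  obtain ⟨a, t, hamono, hamem, hacol⟩ := exists_mono_seq
    (fun o o' => decide ((1:ℝ)/2 ≤ f o (x o'))) hfib
  have haω : ∀ n, a n < (Cardinal.aleph 1).ord := fun n => (hamem n).1
  have haχ : ∀ n, χ (Ccov (a n)) = mi := fun n => (hamem n).2
  set P : ℕ → K i₀ := fun l => if t l then x (a l) else y (a l) with hP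
  have hvals : ∀ l₁ l₂ : ℕ, l₁ < l₂ →
      (f (a l₁) (P l₁) = 0 ∧ (1:ℝ)/2 ≤ f (a l₁) (P l₂)) ∨
      (f (a l₁) (P l₁) = 1 ∧ f (a l₁) (P l₂) < 1/2) := by
    intro l₁ l₂ hl
    have hcommon : f (a l₁) (x (a l₂)) = f (a l₁) (y (a l₂)) :=
      (htow (a l₂) (haω l₂)).2.2.2 (a l₁) (hamono hl)
    have hPl₂ : f (a l₁) (P l₂) = f (a l₁) (x (a l₂)) := by
      rw [hP]
      by_cases ht2 : t l₂ <;> simp [ht2, hcommon]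
    have hcol := hacol l₁ l₂ hl
    by_cases ht : t l₁
    · left
      refine ⟨by simp [hP, ht, (htow (a l₁) (haω l₁)).1], ?_⟩
      rw [hPl₂]
      have : decide ((1:ℝ)/2 ≤ f (a l₁) (x (a l₂))) = true := by rw [hcol, ht]
      exact of_decide_eq_true this
    · right
      refine ⟨by simp [hP, ht, (htow (a l₁) (haω l₁)).2.1], ?_⟩
      rw [hPl₂]
      have : decide ((1:ℝ)/2 ≤ f (a l₁) (x (a l₂))) = false := by
        rw [hcol]; simpa using ht
      have := of_decide_eq_false this
      linarith [not_le.mp this]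
  have hPinj : Function.Injective P := by
    intro l₁ l₂ h
    by_contra hne
    rcases Nat.lt_or_ge l₁ l₂ with hlt | hge
    · rcases hvals l₁ l₂ hlt with ⟨h0, hb⟩ | ⟨h0, hb⟩ <;> rw [h] at h0 <;> linarith
    · have hlt : l₂ < l₁ := by omega
      rcases hvals l₂ l₁ hlt with ⟨h0, hb⟩ | ⟨h0, hb⟩ <;> rw [← h] at h0 <;> linarith
  refine ⟨mi, fun j => Ccov (a j), P, fun j => ⟨(hCcov (a j) (haω j)).1, haχ j⟩, hPinj, ?_⟩
  rintro l₁ l₂ hl c ⟨c', hc'D, hcc'⟩ ⟨⟨z, hz, hzi⟩, ⟨z', hz', hzi'⟩⟩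
  obtain ⟨u, hu, hc'u⟩ := (hCcov (a l₁) (haω l₁)).2 c' hc'D
  obtain ⟨r, rfl⟩ := hu
  have h1 : f (a l₁) (P l₁) ∈ Set.Ioo ((r : ℝ)/4 - 1/4) ((r : ℝ)/4 + 1/4) := by
    have := hc'u (hcc' hz)
    rwa [Set.mem_preimage, hzi] at this
  have h2 : f (a l₁) (P l₂) ∈ Set.Ioo ((r : ℝ)/4 - 1/4) ((r : ℝ)/4 + 1/4) := by
    have := hc'u (hcc' hz')
    rwa [Set.mem_preimage, hzi'] at this
  obtain ⟨h1a, h1b⟩ := h1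
  obtain ⟨h2a, h2b⟩ := h2
  rcases hvals l₁ l₂ hl with ⟨h0, hb⟩ | ⟨h0, hb⟩ <;> rw [h0] at h1a h1b <;> linarith
set_option synthInstance.maxHeartbeats 1000000 in
set_option maxHeartbeats 1000000 in
lemma last_package {m : ℕ} {K : Fin m → Type*} [∀ i, TopologicalSpace (K i)]
    (i₀ : Fin m) [T1Space (K i₀)] [Infinite (K i₀)]
    (𝔠 : Set (Finset (Set (∀ i, K i))))
    (hcof : ∀ U : Set (Set (∀ i, K i)), (∀ u ∈ U, IsOpen u) → ⋃₀ U = Set.univ →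
      ∃ C ∈ 𝔠, RefinesFam C U) (n : ℕ) (hn : 0 < n) :
    ∃ (D : Finset (Set (∀ i, K i))) (p : Fin n → K i₀), D ∈ 𝔠 ∧ Function.Injective p ∧
      ∀ c : Set (∀ i, K i), (∃ c' ∈ D, c ⊆ c') → ∀ l₁ l₂ : Fin n, l₁ ≠ l₂ →
        ¬ ((∃ z ∈ c, z i₀ = p l₁) ∧ (∃ z ∈ c, z i₀ = p l₂)) := by
  classical
  set p : Fin n → K i₀ := fun l => Infinite.natEmbedding (K i₀) l.val with hp
  have hpinj : Function.Injective p :=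
    fun l₁ l₂ h => Fin.val_injective ((Infinite.natEmbedding (K i₀)).injective h)
  set V : Fin n → Set (K i₀) := fun j => (p '' {l | l ≠ j})ᶜ with hV
  have hopen : ∀ u ∈ Set.range (fun j : Fin n => (fun z : ∀ i, K i => z i₀) ⁻¹' V j),
      IsOpen u := by
    rintro u ⟨j, rfl⟩
    exact IsOpen.preimage (continuous_apply i₀) ((Set.toFinite _).isClosed.isOpen_compl)
  have hcover : ⋃₀ Set.range (fun j : Fin n => (fun z : ∀ i, K i => z i₀) ⁻¹' V j)
      = Set.univ := by
    rw [Set.eq_univ_iff_forall]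
    intro z
    by_cases hz : z i₀ ∈ Set.range p
    · obtain ⟨j, hj⟩ := hz
      refine Set.mem_sUnion.mpr ⟨_, ⟨j, rfl⟩, ?_⟩
      simp only [Set.mem_preimage, hV, Set.mem_compl_iff]
      rintro ⟨l, hl, hlj⟩
      exact hl (hpinj (hlj.trans hj.symm))
    · refine Set.mem_sUnion.mpr ⟨_, ⟨⟨0, hn⟩, rfl⟩, ?_⟩
      simp only [Set.mem_preimage, hV, Set.mem_compl_iff]
      rintro ⟨l, -, hlj⟩
      exact hz ⟨l, hlj⟩
  obtain ⟨D, hD𝔠, hDref⟩ := hcof _ hopen hcover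
  refine ⟨D, p, hD𝔠, hpinj, ?_⟩
  rintro c ⟨c', hc'D, hcc'⟩ l₁ l₂ hne ⟨⟨z, hz, hzi⟩, ⟨z', hz', hzi'⟩⟩
  obtain ⟨u, ⟨j, rfl⟩, hc'u⟩ := hDref c' hc'D
  have h1 : p l₁ ∈ V j := by
    have := hc'u (hcc' hz); rwa [Set.mem_preimage, hzi] at this
  have h2 : p l₂ ∈ V j := by
    have := hc'u (hcc' hz'); rwa [Set.mem_preimage, hzi'] at this
  have hl₁ : l₁ = j := by
    by_contra h
    exact h1 ⟨l₁, h, rfl⟩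
  have hl₂ : l₂ = j := by
    by_contra h
    exact h2 ⟨l₂, h, rfl⟩
  exact hne (hl₁.trans hl₂.symm)
set_option synthInstance.maxHeartbeats 1000000 in
set_option maxHeartbeats 4000000 in
/-- If `K₀, …, K_{d-1}` are nonmetrizable compacta and `K_d` is an infinite compactum,
then `K₀ × ⋯ × K_d` does not have free dimension ≤ d. -/
theorem stmt11 (d : ℕ) (hd : 1 ≤ d) (K : Fin (d + 1) → Type*)
    [∀ i, TopologicalSpace (K i)] [∀ i, CompactSpace (K i)] [∀ i, T2Space (K i)]
    (hnm : ∀ i : Fin (d + 1), (i : ℕ) < d → ¬ TopologicalSpace.MetrizableSpace (K i))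
    (hinf : Infinite (K (Fin.last d))) :
    ¬ FreeDimLE (∀ i, K i) d := by
  intro hFD
  classical
  haveI := hinf
  obtain ⟨𝔠, M, χ, hM, ⟨hFCCall, hcof⟩, hmain⟩ := hFD
  have hpkg : ∀ i : Fin d, ∃ (mi : ℕ) (D : ℕ → Finset (Set (∀ j, K j)))
      (P : ℕ → K i.castSucc),
      (∀ j, D j ∈ 𝔠 ∧ χ (D j) = mi) ∧ Function.Injective P ∧
      ∀ l₁ l₂ : ℕ, l₁ < l₂ → ∀ c : Set (∀ j, K j),
        (∃ c' ∈ D l₁, c ⊆ c') →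
        ¬ ((∃ z ∈ c, z i.castSucc = P l₁) ∧ (∃ z ∈ c, z i.castSucc = P l₂)) :=
    fun i => coord_package i.castSucc (hnm i.castSucc (by simpa using i.isLt)) 𝔠 χ hcof
  choose mi D P hD hPinj hsep using hpkg
  set Msum := ∑ i : Fin d, mi i with hMsum
  set n := M * (Msum + 1) ^ d + 1 with hn
  obtain ⟨Dl, p, hDl𝔠, hpinj, hlastsep⟩ :=
    last_package (Fin.last d) 𝔠 hcof n (Nat.succ_pos _)
  set N := χ Dl with hN
  set k := N + 1 with hk
  set fam : Fin (d * k + 1) → Finset (Set (∀ j, K j)) :=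
    Fin.snoc (fun jj : Fin (d * k) =>
      D (finProdFinEquiv.symm jj).1 ((finProdFinEquiv.symm jj).2 : ℕ)) Dl with hfam
  have hfam𝔠 : ∀ idx, fam idx ∈ 𝔠 := by
    intro idx
    refine Fin.lastCases ?_ ?_ idx
    · rw [hfam, Fin.snoc_last]; exact hDl𝔠
    · intro jj; rw [hfam, Fin.snoc_castSucc]; exact (hD _ _).1
  obtain ⟨C, ⟨hCclosed, hCcover⟩, hCref, hCcard⟩ := hmain (d * k + 1) fam hfam𝔠
  have hrefl : Refines C Dl := by
    have := hCref (Fin.last (d * k))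
    rwa [hfam, Fin.snoc_last] at this
  have hrefD : ∀ (i : Fin d) (l : ℕ) (hl : l < k), Refines C (D i l) := by
    intro i l hl
    have := hCref ((finProdFinEquiv (i, ⟨l, hl⟩)).castSucc)
    rwa [hfam, Fin.snoc_castSucc, Equiv.symm_apply_apply] at this
  set F : ∀ i : Fin (d + 1), Finset (K i) :=
    fun i => Fin.lastCases (motive := fun i => Finset (K i)) (Finset.image p Finset.univ)
      (fun j => Finset.image (fun l : Fin (k + 1) => P j (l : ℕ)) Finset.univ) i with hF
  have hFlast : F (Fin.last d) = Finset.image p Finset.univ := by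
    rw [hF]; simp only [Fin.lastCases_last]
  have hFcast : ∀ j : Fin d,
      F j.castSucc = Finset.image (fun l : Fin (k + 1) => P j (l : ℕ)) Finset.univ := by
    intro j; rw [hF]; simp only [Fin.lastCases_castSucc]
  have hsepAll : ∀ i, ∀ u ∈ F i, ∀ v ∈ F i, u ≠ v → ∀ c ∈ C,
      ¬ ((∃ z ∈ c, z i = u) ∧ (∃ z ∈ c, z i = v)) := by
    intro i
    refine Fin.lastCases ?_ ?_ i
    · rw [hFlast]
      intro u hu v hv huv c hc
      obtain ⟨l₁, -, rfl⟩ := Finset.mem_image.mp hu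
      obtain ⟨l₂, -, rfl⟩ := Finset.mem_image.mp hv
      exact hlastsep c (hrefl c hc) l₁ l₂ (fun h => huv (by rw [h]))
    · intro j
      rw [hFcast j]
      intro u hu v hv huv c hc
      obtain ⟨l₁, -, rfl⟩ := Finset.mem_image.mp hu
      obtain ⟨l₂, -, rfl⟩ := Finset.mem_image.mp hv
      have hne : (l₁ : ℕ) ≠ (l₂ : ℕ) := fun h => huv (by rw [h])
      rcases Nat.lt_or_ge (l₁ : ℕ) (l₂ : ℕ) with hlt | hge
      · have hl1k : (l₁ : ℕ) < k := by have := l₂.isLt; omega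
        exact hsep j l₁ l₂ hlt c (hrefD j l₁ hl1k c hc)
      · have hlt : (l₂ : ℕ) < (l₁ : ℕ) := by omega
        have hl2k : (l₂ : ℕ) < k := by have := l₁.isLt; omega
        intro ⟨hA, hB⟩
        exact hsep j l₂ l₁ hlt c (hrefD j l₂ hl2k c hc) ⟨hB, hA⟩
  have hlow := countLemma C hCcover F hsepAll
  have hprod : ∏ i, (F i).card = (k + 1) ^ d * n := by
    rw [Fin.prod_univ_castSucc]
    have h1 : ∀ j : Fin d, (F j.castSucc).card = k + 1 := by
      intro j
      rw [hFcast j, Finset.card_image_of_injective _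
        (fun a b h => Fin.val_injective (hPinj j h))]
      simp
    have h2 : (F (Fin.last d)).card = n := by
      rw [hFlast, Finset.card_image_of_injective _ hpinj]
      simp
    rw [h2, Finset.prod_congr rfl (fun j _ => h1 j), Finset.prod_const]
    simp
  have hsum : ∑ idx, χ (fam idx) = k * Msum + N := by
    rw [Fin.sum_univ_castSucc]
    have h1 : ∀ jj : Fin (d * k), χ (fam jj.castSucc) = mi (finProdFinEquiv.symm jj).1 := by
      intro jj; rw [hfam, Fin.snoc_castSucc]; exact (hD _ _).2
    have h2 : χ (fam (Fin.last (d * k))) = N := by rw [hfam, Fin.snoc_last]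
    rw [h2, Finset.sum_congr rfl (fun jj _ => h1 jj)]
    have h3 : ∑ jj : Fin (d * k), mi (finProdFinEquiv.symm jj).1
        = ∑ pr : Fin d × Fin k, mi pr.1 :=
      Equiv.sum_comp finProdFinEquiv.symm (fun pr => mi pr.1)
    rw [h3, Fintype.sum_prod_type]
    simp only [Finset.sum_const, Finset.card_univ, Fintype.card_fin, smul_eq_mul]
    rw [← Finset.mul_sum]
  rw [hsum] at hCcard
  have hklow : (k + 1) ^ d * n ≤ C.card := hprod ▸ hlow
  have hNk : N ≤ k := by omega
  have e1 : k * Msum + N ≤ k * (Msum + 1) := by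
    calc k * Msum + N ≤ k * Msum + k := Nat.add_le_add_left hNk _
      _ = k * (Msum + 1) := by ring
  have e2 : M * (k * Msum + N) ^ d ≤ M * (Msum + 1) ^ d * k ^ d := by
    calc M * (k * Msum + N) ^ d ≤ M * (k * (Msum + 1)) ^ d :=
          Nat.mul_le_mul_left M (Nat.pow_le_pow_left e1 d)
      _ = M * (Msum + 1) ^ d * k ^ d := by rw [mul_pow]; ring
  have e3 : M * (Msum + 1) ^ d * k ^ d < n * k ^ d := by
    have hkpos : 0 < k ^ d := pow_pos (by omega) d
    have hlt : M * (Msum + 1) ^ d < n := by rw [hn]; exact Nat.lt_succ_self _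
    exact mul_lt_mul_of_pos_right hlt hkpos
  have e4 : n * k ^ d ≤ (k + 1) ^ d * n := by
    rw [mul_comm]
    exact Nat.mul_le_mul_right n (Nat.pow_le_pow_left (by omega) d)
  exact lt_irrefl C.card (lt_of_lt_of_le (lt_of_le_of_lt (hCcard.trans e2) e3) (e4.trans hklow))
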